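/- Under the state error residual equations, the adjoint error residual equations, and the optimality-condition inequality, the error in the optimal control satisfies ‖e_u‖_U := (τ·∑_{k=1}^{K} ‖e_u^k‖_{ℝ^m}²)^{1/2} ≤ c₁ + (c₁² + c₂)^{1/2}, where c₁ = (1/(√2·α·λ))·(∑_{i=1}^m ‖b_i‖_{Y'}²)^{1/2}·R_p and c₂ = (1/λ)·[ ((2√2/α)·R_y + ((1+√2)/√α)·R_0)·R_p + (C_D²σ₁/α + σ₂/2)·R_0² + (C_D²σ₁/α² + σ₂/(2α))·R_y² ], with R_y = (τ·∑_{k=1}^{K} ‖r_y^k‖_{Y'}²)^{1/2}, R_p = (τ·∑_{k=1}^{K} ‖r_p^k‖_{Y'}²)^{1/2}, and R_0 = m(e_y^0, e_y^0)^{1/2}. -/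

import Mathlib

set_option maxHeartbeats 1000000

open Finset

private lemma ocb_sum_cs {ι : Type*} (s : Finset ι) (f g : ι → ℝ) :
    ∑ i ∈ s, f i * g i ≤ Real.sqrt (∑ i ∈ s, f i ^ 2) * Real.sqrt (∑ i ∈ s, g i ^ 2) := by
  calc ∑ i ∈ s, f i * g i ≤ |∑ i ∈ s, f i * g i| := le_abs_self _
    _ = Real.sqrt ((∑ i ∈ s, f i * g i) ^ 2) := (Real.sqrt_sq_eq_abs _).symm
    _ ≤ Real.sqrt ((∑ i ∈ s, f i ^ 2) * ∑ i ∈ s, g i ^ 2) :=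
        Real.sqrt_le_sqrt (Finset.sum_mul_sq_le_sq_mul_sq s f g)
    _ = _ := Real.sqrt_mul (by positivity) _

private lemma ocb_tau_cs {ι : Type*} {t : ℝ} (ht : 0 ≤ t) (s : Finset ι) (f g : ι → ℝ) :
    t * ∑ i ∈ s, f i * g i
      ≤ Real.sqrt (t * ∑ i ∈ s, f i ^ 2) * Real.sqrt (t * ∑ i ∈ s, g i ^ 2) := by
  have h2 : t * ∑ i ∈ s, f i * g i
      ≤ t * (Real.sqrt (∑ i ∈ s, f i ^ 2) * Real.sqrt (∑ i ∈ s, g i ^ 2)) :=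
    mul_le_mul_of_nonneg_left (ocb_sum_cs s f g) ht
  refine h2.trans_eq ?_
  rw [Real.sqrt_mul ht, Real.sqrt_mul ht]
  linear_combination (-(Real.sqrt (∑ i ∈ s, f i ^ 2) * Real.sqrt (∑ i ∈ s, g i ^ 2))) *
    (Real.mul_self_sqrt ht)

private lemma ocb_bilin_sq_le {Y : Type*} [AddCommGroup Y] [Module ℝ Y]
    (B : Y →ₗ[ℝ] Y →ₗ[ℝ] ℝ) (hs : ∀ v w, B v w = B w v) (hp : ∀ v, 0 ≤ B v v) (v w : Y) :
    (B v w) ^ 2 ≤ B v v * B w w := by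
  have key : ∀ t : ℝ, 0 ≤ B w w * (t * t) + (2 * B v w) * t + B v v := by
    intro t
    have h0 := hp (v + t • w)
    have hexp : B (v + t • w) (v + t • w)
        = B w w * (t * t) + (2 * B v w) * t + B v v := by
      simp only [map_add, map_smul, LinearMap.add_apply, LinearMap.smul_apply, smul_eq_mul]
      rw [hs w v]; ring
    rw [hexp] at h0; exact h0
  have hd := discrim_le_zero key
  rw [discrim] at hd
  nlinarith [hd]

private lemma ocb_bilin_abs_le {Y : Type*} [AddCommGroup Y] [Module ℝ Y]
    (B : Y →ₗ[ℝ] Y →ₗ[ℝ] ℝ) (hs : ∀ v w, B v w = B w v) (hp : ∀ v, 0 ≤ B v v) (v w : Y) :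
    |B v w| ≤ Real.sqrt (B v v) * Real.sqrt (B w w) := by
  rw [← Real.sqrt_sq_eq_abs, ← Real.sqrt_mul (hp v)]
  exact Real.sqrt_le_sqrt (ocb_bilin_sq_le B hs hp v w)

private lemma ocb_bilin_diff_ge₁ {Y : Type*} [AddCommGroup Y] [Module ℝ Y]
    (B : Y →ₗ[ℝ] Y →ₗ[ℝ] ℝ) (hs : ∀ v w, B v w = B w v) (hp : ∀ v, 0 ≤ B v v) (v w : Y) :
    (1/2) * (B v v) - (1/2) * (B w w) ≤ B (v - w) v := by
  have h0 := hp (v - w)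
  have h1 : B (v - w) (v - w) = B v v - 2 * B w v + B w w := by
    simp only [map_sub, LinearMap.sub_apply]
    rw [hs v w]; ring
  have h2 : B (v - w) v = B v v - B w v := by
    simp only [map_sub, LinearMap.sub_apply]
  rw [h1] at h0
  rw [h2]
  linarith

private lemma ocb_bilin_diff_ge₂ {Y : Type*} [AddCommGroup Y] [Module ℝ Y]
    (B : Y →ₗ[ℝ] Y →ₗ[ℝ] ℝ) (hs : ∀ v w, B v w = B w v) (hp : ∀ v, 0 ≤ B v v) (v w : Y) :
    (1/2) * (B v v) - (1/2) * (B w w) ≤ B v (v - w) := by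
  have h2 : B v (v - w) = B (v - w) v := by
    simp only [map_sub, LinearMap.sub_apply]
    rw [hs v w]
  rw [h2]
  exact ocb_bilin_diff_ge₁ B hs hp v w

private lemma ocb_telescope_sub (h : ℕ → ℝ) (K : ℕ) :
    ∑ k ∈ Finset.Icc 1 K, (h k - h (k - 1)) = h K - h 0 := by
  induction K with
  | zero => simp
  | succ n ih =>
    rw [Finset.sum_Icc_succ_top (by omega : 1 ≤ n + 1), ih]
    simp only [Nat.add_sub_cancel]
    ring

private lemma ocb_telescope_sub' (g : ℕ → ℝ) (M : ℕ) :
    ∑ k ∈ Finset.Icc 1 M, (g k - g (k + 1)) = g 1 - g (M + 1) := by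
  induction M with
  | zero => simp
  | succ n ih =>
    rw [Finset.sum_Icc_succ_top (by omega : 1 ≤ n + 1), ih]
    ring

private lemma ocb_sum_split_top {M : Type*} [AddCommMonoid M] {K : ℕ} (hK : 1 ≤ K) (f : ℕ → M) :
    ∑ k ∈ Finset.Icc 1 K, f k = (∑ k ∈ Finset.Icc 1 (K - 1), f k) + f K := by
  obtain ⟨n, rfl⟩ : ∃ n, K = n + 1 := ⟨K - 1, by omega⟩
  rw [Finset.sum_Icc_succ_top (by omega : 1 ≤ n + 1)]
  simp

private lemma ocb_telescope_dual {Y : Type*} [AddCommGroup Y] [Module ℝ Y]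
    (B : Y →ₗ[ℝ] Y →ₗ[ℝ] ℝ) (f g : ℕ → Y) :
    ∀ K : ℕ, 1 ≤ K →
      ∑ k ∈ Finset.Icc 1 K, B (f k - f (k - 1)) (g k)
        = (∑ k ∈ Finset.Icc 1 (K - 1), B (f k) (g k - g (k + 1)))
          + B (f K) (g K) - B (f 0) (g 1) := by
  intro K
  induction K with
  | zero => omega
  | succ n ih =>
    intro _
    rcases Nat.eq_zero_or_pos n with hn | hn
    · subst hn
      simp [Finset.Icc_self, map_sub, LinearMap.sub_apply]
    · have ih' := ih hn
      rw [Finset.sum_Icc_succ_top (by omega : 1 ≤ n + 1), ih']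
      have hr : ∑ k ∈ Finset.Icc 1 (n + 1 - 1), B (f k) (g k - g (k + 1))
          = (∑ k ∈ Finset.Icc 1 (n - 1), B (f k) (g k - g (k + 1)))
            + B (f n) (g n - g (n + 1)) := by
        have : n + 1 - 1 = (n - 1) + 1 := by omega
        rw [this, Finset.sum_Icc_succ_top (by omega : 1 ≤ (n - 1) + 1)]
        have : n - 1 + 1 = n := by omega
        rw [this]
      rw [hr]
      simp only [Nat.add_sub_cancel, map_sub, LinearMap.sub_apply]
      ring

private lemma ocb_quad_root_bound {al b c x : ℝ} (hal : 0 < al) (hb : 0 ≤ b) (hc : 0 ≤ c)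
    (hx : 0 ≤ x) (h : al * x ^ 2 ≤ b * x + c) : x ≤ b / al + Real.sqrt (c / al) := by
  by_contra hcon
  push_neg at hcon
  set s := Real.sqrt (c / al) with hs
  have hs0 : 0 ≤ s := Real.sqrt_nonneg _
  have hs2 : al * s ^ 2 = c := by
    rw [hs, Real.sq_sqrt (by positivity)]; field_simp
  have hxpos : 0 < x := lt_of_le_of_lt (by positivity) hcon
  have e : al * (b / al + s) = b + al * s := by field_simp
  have h2 : b + al * s < al * x := by
    have := mul_lt_mul_of_pos_left hcon hal
    rwa [e] at this
  have h3 : s ≤ x := le_of_lt (lt_of_le_of_lt (le_add_of_nonneg_left (by positivity)) hcon)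
  nlinarith [mul_lt_mul_of_pos_right h2 hxpos, mul_le_mul_of_nonneg_left h3 (mul_nonneg hal.le hs0)]

private lemma ocb_sqrt_add_le {x y : ℝ} (hx : 0 ≤ x) (hy : 0 ≤ y) :
    Real.sqrt (x + y) ≤ Real.sqrt x + Real.sqrt y := by
  have h : x + y ≤ (Real.sqrt x + Real.sqrt y) ^ 2 := by
    nlinarith [Real.sq_sqrt hx, Real.sq_sqrt hy, Real.sqrt_nonneg x, Real.sqrt_nonneg y,
      mul_nonneg (Real.sqrt_nonneg x) (Real.sqrt_nonneg y)]
  calc Real.sqrt (x + y) ≤ Real.sqrt ((Real.sqrt x + Real.sqrt y) ^ 2) := Real.sqrt_le_sqrt h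
    _ = _ := Real.sqrt_sq (by positivity)

private lemma ocb_half_sq_bound {al b d M P : ℝ} (hal : 0 < al) (hb : 0 ≤ b) (hd : 0 ≤ d)
    (hM : 0 ≤ M) (h : (1/2) * M ^ 2 + al * P ^ 2 ≤ b * P + d) :
    M ≤ b / Real.sqrt (2 * al) + Real.sqrt (2 * d) := by
  have h5 : 2 * b * P - 2 * al * P ^ 2 ≤ b ^ 2 / (2 * al) := by
    rw [le_div_iff₀ (by positivity)]
    nlinarith [sq_nonneg (b - 2 * al * P)]
  have key : M ^ 2 ≤ b ^ 2 / (2 * al) + 2 * d := by nlinarith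
  have h6 : M ≤ Real.sqrt (b ^ 2 / (2 * al) + 2 * d) := by
    calc M = Real.sqrt (M ^ 2) := (Real.sqrt_sq hM).symm
      _ ≤ _ := Real.sqrt_le_sqrt key
  have h7 : Real.sqrt (b ^ 2 / (2 * al) + 2 * d)
      ≤ Real.sqrt (b ^ 2 / (2 * al)) + Real.sqrt (2 * d) :=
    ocb_sqrt_add_le (by positivity) (by positivity)
  have h8 : Real.sqrt (b ^ 2 / (2 * al)) = b / Real.sqrt (2 * al) := by
    rw [Real.sqrt_div (sq_nonneg b), Real.sqrt_sq hb]
  rw [h8] at h7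
  linarith

private lemma ocb_young4 (Q u v : ℝ) : Q * u + Q * v ≤ Q ^ 2 + 2 * u ^ 2 + v ^ 2 := by
  nlinarith [sq_nonneg (Q - u - v), sq_nonneg (u - v), sq_nonneg Q, sq_nonneg u]

private lemma ocb_young5 (Q u v : ℝ) : Q * u + Q * v ≤ Q ^ 2 + u ^ 2 / 2 + v ^ 2 := by
  nlinarith [sq_nonneg (2 * Q - u - v), sq_nonneg (u - v), sq_nonneg v]
/-- A posteriori bound for the error in the optimal control
(`‖u* − u_N*‖_U ≤ c₁ + √(c₁² + c₂)`), valid in both the control-constrained and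
unconstrained case. -/
theorem optimal_control_error_bound
    {Y : Type*} [NormedAddCommGroup Y] [NormedSpace ℝ Y]
    {md K : ℕ} (hK : 1 ≤ K) {τ α : ℝ} (hτ : 0 < τ) (hα : 0 < α)
    (a mm D : Y →ₗ[ℝ] Y →ₗ[ℝ] ℝ)
    (ha : ∀ v : Y, α * ‖v‖ ^ 2 ≤ a v v)
    (hmsymm : ∀ v w : Y, mm v w = mm w v)
    (hmpos : ∀ v : Y, 0 ≤ mm v v)
    (hDsymm : ∀ v w : Y, D v w = D w v)
    (hDpos : ∀ v : Y, 0 ≤ D v v)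
    (hDm : ∀ v : Y, D v v ≤ mm v v)
    {CD σ1 σ2 lam : ℝ} (hCD : 0 ≤ CD) (hσ1 : 0 ≤ σ1) (hσ2 : 0 ≤ σ2) (hlam : 0 < lam)
    (hDC : ∀ v : Y, D v v ≤ CD ^ 2 * ‖v‖ ^ 2)
    (b : Fin md → Y →L[ℝ] ℝ)
    (ey ep : ℕ → Y) (eu : ℕ → Fin md → ℝ)
    (ry rp : ℕ → Y →L[ℝ] ℝ)
    (hresy : ∀ k ∈ Finset.Icc 1 K, ∀ φ : Y,
      mm (ey k - ey (k - 1)) φ + τ * a (ey k) φ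
        - τ * ∑ i, b i φ * eu k i = τ * ry k φ)
    (hresp : ∀ k ∈ Finset.Icc 1 (K - 1), ∀ φ : Y,
      mm φ (ep k - ep (k + 1)) + τ * a φ (ep k) + τ * σ1 * D (ey k) φ = τ * rp k φ)
    (hrespK : ∀ φ : Y,
      mm φ (ep K) + τ * a φ (ep K) + (τ * σ1 + σ2) * D (ey K) φ = τ * rp K φ)
    (hopt : ∀ k ∈ Finset.Icc 1 K,
      ∑ i, (lam * eu k i - b i (ep k)) * eu k i ≤ 0)
    (Ry Rp R0 c1 c2 : ℝ)
    (hRy : Ry = Real.sqrt (τ * ∑ k ∈ Finset.Icc 1 K, ‖ry k‖ ^ 2))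
    (hRp : Rp = Real.sqrt (τ * ∑ k ∈ Finset.Icc 1 K, ‖rp k‖ ^ 2))
    (hR0 : R0 = Real.sqrt (mm (ey 0) (ey 0)))
    (hc1 : c1 = (1 / (Real.sqrt 2 * α * lam)) * Real.sqrt (∑ i, ‖b i‖ ^ 2) * Rp)
    (hc2 : c2 = (1 / lam) *
      (((2 * Real.sqrt 2 / α) * Ry + ((1 + Real.sqrt 2) / Real.sqrt α) * R0) * Rp
        + (CD ^ 2 * σ1 / α + σ2 / 2) * R0 ^ 2
        + (CD ^ 2 * σ1 / α ^ 2 + σ2 / (2 * α)) * Ry ^ 2)) :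
    Real.sqrt (τ * ∑ k ∈ Finset.Icc 1 K, ∑ i, eu k i ^ 2)
      ≤ c1 + Real.sqrt (c1 ^ 2 + c2) := by
  have hK1 : K - 1 + 1 = K := by omega
  set s2 := Real.sqrt 2 with hs2def
  set sa := Real.sqrt α with hsadef
  set ss1 := Real.sqrt σ1 with hss1def
  set ss2 := Real.sqrt σ2 with hss2def
  have hs2sq : s2 ^ 2 = 2 := Real.sq_sqrt (by norm_num)
  have hsasq : sa ^ 2 = α := Real.sq_sqrt hα.le
  have hss1sq : ss1 ^ 2 = σ1 := Real.sq_sqrt hσ1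
  have hss2sq : ss2 ^ 2 = σ2 := Real.sq_sqrt hσ2
  have hs2pos : 0 < s2 := Real.sqrt_pos.mpr (by norm_num)
  have hsapos : 0 < sa := Real.sqrt_pos.mpr hα
  have hss1_0 : 0 ≤ ss1 := Real.sqrt_nonneg _
  have hss2_0 : 0 ≤ ss2 := Real.sqrt_nonneg _
  have h1s2 : 1 ≤ s2 := by nlinarith only [hs2sq, hs2pos]
  set B2 := ∑ i, ‖b i‖ ^ 2 with hB2def
  have hB2 : 0 ≤ B2 := by positivity
  set Bc := Real.sqrt B2 with hBcdef
  have hBc0 : 0 ≤ Bc := Real.sqrt_nonneg _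
  set X2 := τ * ∑ k ∈ Finset.Icc 1 K, ∑ i, eu k i ^ 2 with hX2def
  have hX20 : 0 ≤ X2 := by positivity
  set X := Real.sqrt X2 with hXdef
  have hX0 : 0 ≤ X := Real.sqrt_nonneg _
  have hXsq : X ^ 2 = X2 := Real.sq_sqrt hX20
  set Y2 := τ * ∑ k ∈ Finset.Icc 1 K, ‖ey k‖ ^ 2 with hY2def
  have hY20 : 0 ≤ Y2 := by positivity
  set Yn := Real.sqrt Y2 with hYndef
  have hYn0 : 0 ≤ Yn := Real.sqrt_nonneg _
  have hYnsq : Yn ^ 2 = Y2 := Real.sq_sqrt hY20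
  set P2 := τ * ∑ k ∈ Finset.Icc 1 K, ‖ep k‖ ^ 2 with hP2def
  have hP20 : 0 ≤ P2 := by positivity
  set Pn := Real.sqrt P2 with hPndef
  have hPn0 : 0 ≤ Pn := Real.sqrt_nonneg _
  have hPnsq : Pn ^ 2 = P2 := Real.sq_sqrt hP20
  set Q1sq := τ * σ1 * ∑ k ∈ Finset.Icc 1 K, D (ey k) (ey k) with hQ1sqdef
  have hQ1sq0 : 0 ≤ Q1sq := by
    apply mul_nonneg (mul_nonneg hτ.le hσ1)
    exact Finset.sum_nonneg fun k _ => hDpos _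
  set Q1 := Real.sqrt Q1sq with hQ1def
  have hQ10 : 0 ≤ Q1 := Real.sqrt_nonneg _
  have hQ1sqe : Q1 ^ 2 = Q1sq := Real.sq_sqrt hQ1sq0
  set Q2sq := σ2 * D (ey K) (ey K) with hQ2sqdef
  have hQ2sq0 : 0 ≤ Q2sq := mul_nonneg hσ2 (hDpos _)
  set Q2 := Real.sqrt Q2sq with hQ2def
  have hQ20 : 0 ≤ Q2 := Real.sqrt_nonneg _
  have hQ2sqe : Q2 ^ 2 = Q2sq := Real.sq_sqrt hQ2sq0
  set Mp1 := Real.sqrt (mm (ep 1) (ep 1)) with hMp1def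
  have hMp10 : 0 ≤ Mp1 := Real.sqrt_nonneg _
  have hMp1sq : Mp1 ^ 2 = mm (ep 1) (ep 1) := Real.sq_sqrt (hmpos _)
  set MpK := Real.sqrt (mm (ep K) (ep K)) with hMpKdef
  have hMpK0 : 0 ≤ MpK := Real.sqrt_nonneg _
  have hMpKsq : MpK ^ 2 = mm (ep K) (ep K) := Real.sq_sqrt (hmpos _)
  have hR00 : 0 ≤ R0 := hR0 ▸ Real.sqrt_nonneg _
  have hR0sq : R0 ^ 2 = mm (ey 0) (ey 0) := by rw [hR0]; exact Real.sq_sqrt (hmpos _)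
  have hRy0 : 0 ≤ Ry := hRy ▸ Real.sqrt_nonneg _
  have hRp0 : 0 ≤ Rp := hRp ▸ Real.sqrt_nonneg _
  -- ======================= duality inequality =======================
  have hstep1 : ∀ k ∈ Finset.Icc 1 K, lam * ∑ i, eu k i ^ 2 ≤ ∑ i, b i (ep k) * eu k i := by
    intro k hk
    have h := hopt k hk
    have hexp : ∑ i, (lam * eu k i - b i (ep k)) * eu k i
        = lam * ∑ i, eu k i ^ 2 - ∑ i, b i (ep k) * eu k i := by
      rw [Finset.mul_sum, ← Finset.sum_sub_distrib]
      exact Finset.sum_congr rfl fun i _ => by ring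
    rw [hexp] at h
    linarith only [h]
  have hs1 : lam * X2 ≤ τ * ∑ k ∈ Finset.Icc 1 K, ∑ i, b i (ep k) * eu k i := by
    have h1 : ∑ k ∈ Finset.Icc 1 K, lam * ∑ i, eu k i ^ 2
        ≤ ∑ k ∈ Finset.Icc 1 K, ∑ i, b i (ep k) * eu k i := Finset.sum_le_sum hstep1
    have h2 := mul_le_mul_of_nonneg_left h1 hτ.le
    calc lam * X2 = τ * ∑ k ∈ Finset.Icc 1 K, lam * ∑ i, eu k i ^ 2 := by
          rw [hX2def, ← Finset.mul_sum]; ring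
      _ ≤ _ := h2
  have hid1 : ∀ k ∈ Finset.Icc 1 K,
      τ * ∑ i, b i (ep k) * eu k i
        = mm (ey k - ey (k - 1)) (ep k) + τ * a (ey k) (ep k) - τ * ry k (ep k) := by
    intro k hk
    have h := hresy k hk (ep k)
    linarith only [h]
  have hsum1 : τ * ∑ k ∈ Finset.Icc 1 K, ∑ i, b i (ep k) * eu k i
      = (∑ k ∈ Finset.Icc 1 K, mm (ey k - ey (k - 1)) (ep k))
        + τ * (∑ k ∈ Finset.Icc 1 K, a (ey k) (ep k))
        - τ * (∑ k ∈ Finset.Icc 1 K, ry k (ep k)) := by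
    have h := Finset.sum_congr rfl hid1
    simp only [Finset.sum_add_distrib, Finset.sum_sub_distrib, ← Finset.mul_sum] at h
    exact h
  have hid2 : ∀ k ∈ Finset.Icc 1 (K - 1),
      τ * a (ey k) (ep k)
        = τ * rp k (ey k) - mm (ey k) (ep k - ep (k + 1)) - τ * σ1 * D (ey k) (ey k) := by
    intro k hk
    have h := hresp k hk (ey k)
    linarith only [h]
  have hsum2 : τ * (∑ k ∈ Finset.Icc 1 (K - 1), a (ey k) (ep k))
      = τ * (∑ k ∈ Finset.Icc 1 (K - 1), rp k (ey k))
        - (∑ k ∈ Finset.Icc 1 (K - 1), mm (ey k) (ep k - ep (k + 1)))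
        - τ * σ1 * (∑ k ∈ Finset.Icc 1 (K - 1), D (ey k) (ey k)) := by
    have h := Finset.sum_congr rfl hid2
    simp only [Finset.sum_sub_distrib, ← Finset.mul_sum] at h
    exact h
  have hid3 : τ * a (ey K) (ep K)
      = τ * rp K (ey K) - mm (ey K) (ep K) - τ * σ1 * D (ey K) (ey K)
        - σ2 * D (ey K) (ey K) := by
    have h := hrespK (ey K)
    have e : (τ * σ1 + σ2) * D (ey K) (ey K)
        = τ * σ1 * D (ey K) (ey K) + σ2 * D (ey K) (ey K) := by ring
    linarith only [h, e]
  have hsplita : τ * (∑ k ∈ Finset.Icc 1 K, a (ey k) (ep k))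
      = τ * (∑ k ∈ Finset.Icc 1 (K - 1), a (ey k) (ep k)) + τ * a (ey K) (ep K) := by
    rw [ocb_sum_split_top hK (f := fun k => a (ey k) (ep k))]; ring
  have hsplitrp : τ * (∑ k ∈ Finset.Icc 1 K, rp k (ey k))
      = τ * (∑ k ∈ Finset.Icc 1 (K - 1), rp k (ey k)) + τ * rp K (ey K) := by
    rw [ocb_sum_split_top hK (f := fun k => (rp k) (ey k))]; ring
  have hsplitD : τ * σ1 * (∑ k ∈ Finset.Icc 1 K, D (ey k) (ey k))
      = τ * σ1 * (∑ k ∈ Finset.Icc 1 (K - 1), D (ey k) (ey k))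
        + τ * σ1 * D (ey K) (ey K) := by
    rw [ocb_sum_split_top hK (f := fun k => D (ey k) (ey k))]; ring
  have htel := ocb_telescope_dual mm ey ep K hK
  have hdual : lam * X2 + Q1sq + Q2sq
      ≤ - mm (ey 0) (ep 1) + τ * (∑ k ∈ Finset.Icc 1 K, rp k (ey k))
        - τ * (∑ k ∈ Finset.Icc 1 K, ry k (ep k)) := by
    rw [hQ1sqdef, hQ2sqdef]
    linarith only [hs1, hsum1, hsum2, hid3, hsplita, hsplitrp, hsplitD, htel]
  -- ======================= bounds on RHS of duality =======================
  have hbd1 : - mm (ey 0) (ep 1) ≤ R0 * Mp1 := by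
    have habs := ocb_bilin_abs_le mm hmsymm hmpos (ey 0) (ep 1)
    have h1 : - mm (ey 0) (ep 1) ≤ |mm (ey 0) (ep 1)| := neg_le_abs _
    have h2 : Real.sqrt (mm (ey 0) (ey 0)) * Real.sqrt (mm (ep 1) (ep 1)) = R0 * Mp1 := by
      rw [hR0, hMp1def]
    linarith only [habs, h1, h2]
  have hbd2 : τ * (∑ k ∈ Finset.Icc 1 K, rp k (ey k)) ≤ Rp * Yn := by
    have h1 : ∀ k ∈ Finset.Icc 1 K, (rp k) (ey k) ≤ ‖rp k‖ * ‖ey k‖ := by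
      intro k _
      calc (rp k) (ey k) ≤ |(rp k) (ey k)| := le_abs_self _
        _ = ‖(rp k) (ey k)‖ := (Real.norm_eq_abs _).symm
        _ ≤ _ := (rp k).le_opNorm _
    have h2 : τ * (∑ k ∈ Finset.Icc 1 K, rp k (ey k))
        ≤ τ * ∑ k ∈ Finset.Icc 1 K, ‖rp k‖ * ‖ey k‖ :=
      mul_le_mul_of_nonneg_left (Finset.sum_le_sum h1) hτ.le
    have h3 := ocb_tau_cs hτ.le (Finset.Icc 1 K) (fun k => ‖rp k‖) (fun k => ‖ey k‖)
    rw [← hY2def, ← hYndef, ← hRp] at h3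
    linarith only [h2, h3]
  have hbd3 : - (τ * (∑ k ∈ Finset.Icc 1 K, ry k (ep k))) ≤ Ry * Pn := by
    have h1 : ∀ k ∈ Finset.Icc 1 K, - ((ry k) (ep k)) ≤ ‖ry k‖ * ‖ep k‖ := by
      intro k _
      calc - ((ry k) (ep k)) ≤ |(ry k) (ep k)| := neg_le_abs _
        _ = ‖(ry k) (ep k)‖ := (Real.norm_eq_abs _).symm
        _ ≤ _ := (ry k).le_opNorm _
    have h2 : τ * (∑ k ∈ Finset.Icc 1 K, - ((ry k) (ep k)))
        ≤ τ * ∑ k ∈ Finset.Icc 1 K, ‖ry k‖ * ‖ep k‖ :=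
      mul_le_mul_of_nonneg_left (Finset.sum_le_sum h1) hτ.le
    have h3 := ocb_tau_cs hτ.le (Finset.Icc 1 K) (fun k => ‖ry k‖) (fun k => ‖ep k‖)
    rw [← hP2def, ← hPndef, ← hRy] at h3
    have h4 : ∑ k ∈ Finset.Icc 1 K, - ((ry k) (ep k))
        = - ∑ k ∈ Finset.Icc 1 K, (ry k) (ep k) := Finset.sum_neg_distrib _
    rw [h4] at h2
    linarith only [h2, h3]
  have hA : lam * X2 + Q1sq + Q2sq ≤ R0 * Mp1 + Rp * Yn + Ry * Pn := by
    linarith only [hdual, hbd1, hbd2, hbd3]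
  -- ======================= state energy estimate =======================
  have hidy : ∀ k ∈ Finset.Icc 1 K,
      τ * a (ey k) (ey k)
        = τ * ry k (ey k) + τ * ∑ i, b i (ey k) * eu k i
          - mm (ey k - ey (k - 1)) (ey k) := by
    intro k hk
    have h := hresy k hk (ey k)
    linarith only [h]
  have hsumy : τ * (∑ k ∈ Finset.Icc 1 K, a (ey k) (ey k))
      = τ * (∑ k ∈ Finset.Icc 1 K, ry k (ey k))
        + τ * (∑ k ∈ Finset.Icc 1 K, ∑ i, b i (ey k) * eu k i)
        - ∑ k ∈ Finset.Icc 1 K, mm (ey k - ey (k - 1)) (ey k) := by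
    have h := Finset.sum_congr rfl hidy
    simp only [Finset.sum_add_distrib, Finset.sum_sub_distrib, ← Finset.mul_sum] at h
    exact h
  have hco : α * Y2 ≤ τ * (∑ k ∈ Finset.Icc 1 K, a (ey k) (ey k)) := by
    have h1 : ∑ k ∈ Finset.Icc 1 K, α * ‖ey k‖ ^ 2
        ≤ ∑ k ∈ Finset.Icc 1 K, a (ey k) (ey k) :=
      Finset.sum_le_sum fun k _ => ha (ey k)
    have h2 := mul_le_mul_of_nonneg_left h1 hτ.le
    calc α * Y2 = τ * ∑ k ∈ Finset.Icc 1 K, α * ‖ey k‖ ^ 2 := by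
          rw [hY2def, ← Finset.mul_sum]; ring
      _ ≤ _ := h2
  have htely : ∑ k ∈ Finset.Icc 1 K,
        ((1/2) * mm (ey k) (ey k) - (1/2) * mm (ey (k - 1)) (ey (k - 1)))
      = (1/2) * mm (ey K) (ey K) - (1/2) * mm (ey 0) (ey 0) := by
    have h := ocb_telescope_sub (fun j => (1/2) * mm (ey j) (ey j)) K
    simpa using h
  have hmlowy : ∑ k ∈ Finset.Icc 1 K,
        ((1/2) * mm (ey k) (ey k) - (1/2) * mm (ey (k - 1)) (ey (k - 1)))
      ≤ ∑ k ∈ Finset.Icc 1 K, mm (ey k - ey (k - 1)) (ey k) :=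
    Finset.sum_le_sum fun k _ => ocb_bilin_diff_ge₁ mm hmsymm hmpos _ _
  have hbu : ∀ k ∈ Finset.Icc 1 K,
      ∑ i, b i (ey k) * eu k i ≤ ‖ey k‖ * (Bc * Real.sqrt (∑ i, eu k i ^ 2)) := by
    intro k _
    have h1 := ocb_sum_cs Finset.univ (fun i => b i (ey k)) (fun i => eu k i)
    have h2 : (∑ i, (b i (ey k)) ^ 2) ≤ ∑ i, ‖b i‖ ^ 2 * ‖ey k‖ ^ 2 := by
      apply Finset.sum_le_sum
      intro i _
      have h4 : |b i (ey k)| ≤ ‖b i‖ * ‖ey k‖ := by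
        rw [← Real.norm_eq_abs]; exact (b i).le_opNorm _
      nlinarith only [mul_self_le_mul_self (abs_nonneg (b i (ey k))) h4, sq_abs (b i (ey k))]
    have h5 : Real.sqrt (∑ i, (b i (ey k)) ^ 2) ≤ Bc * ‖ey k‖ := by
      calc Real.sqrt (∑ i, (b i (ey k)) ^ 2)
          ≤ Real.sqrt (∑ i, ‖b i‖ ^ 2 * ‖ey k‖ ^ 2) := Real.sqrt_le_sqrt h2
        _ = Real.sqrt (B2 * ‖ey k‖ ^ 2) := by rw [← Finset.sum_mul, ← hB2def]
        _ = Bc * ‖ey k‖ := by rw [Real.sqrt_mul hB2, Real.sqrt_sq (norm_nonneg _), hBcdef]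
    calc ∑ i, b i (ey k) * eu k i
        ≤ Real.sqrt (∑ i, (b i (ey k)) ^ 2) * Real.sqrt (∑ i, eu k i ^ 2) := h1
      _ ≤ (Bc * ‖ey k‖) * Real.sqrt (∑ i, eu k i ^ 2) :=
          mul_le_mul_of_nonneg_right h5 (Real.sqrt_nonneg _)
      _ = _ := by ring
  have hbusum : τ * (∑ k ∈ Finset.Icc 1 K, ∑ i, b i (ey k) * eu k i) ≤ Bc * (Yn * X) := by
    have h1 : τ * (∑ k ∈ Finset.Icc 1 K, ∑ i, b i (ey k) * eu k i)
        ≤ τ * ∑ k ∈ Finset.Icc 1 K, ‖ey k‖ * (Bc * Real.sqrt (∑ i, eu k i ^ 2)) :=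
      mul_le_mul_of_nonneg_left (Finset.sum_le_sum hbu) hτ.le
    have h2 := ocb_tau_cs hτ.le (Finset.Icc 1 K) (fun k => ‖ey k‖)
      (fun k => Real.sqrt (∑ i, eu k i ^ 2))
    have h3 : ∑ k ∈ Finset.Icc 1 K, (Real.sqrt (∑ i, eu k i ^ 2)) ^ 2
        = ∑ k ∈ Finset.Icc 1 K, ∑ i, eu k i ^ 2 :=
      Finset.sum_congr rfl fun k _ => Real.sq_sqrt (by positivity)
    rw [h3, ← hY2def, ← hYndef, ← hX2def, ← hXdef] at h2
    have h4 : ∑ k ∈ Finset.Icc 1 K, ‖ey k‖ * (Bc * Real.sqrt (∑ i, eu k i ^ 2))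
        = Bc * ∑ k ∈ Finset.Icc 1 K, ‖ey k‖ * Real.sqrt (∑ i, eu k i ^ 2) := by
      rw [Finset.mul_sum]
      exact Finset.sum_congr rfl fun k _ => by ring
    calc τ * (∑ k ∈ Finset.Icc 1 K, ∑ i, b i (ey k) * eu k i)
        ≤ τ * ∑ k ∈ Finset.Icc 1 K, ‖ey k‖ * (Bc * Real.sqrt (∑ i, eu k i ^ 2)) := h1
      _ = Bc * (τ * ∑ k ∈ Finset.Icc 1 K, ‖ey k‖ * Real.sqrt (∑ i, eu k i ^ 2)) := by
          rw [h4]; ring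
      _ ≤ Bc * (Yn * X) := mul_le_mul_of_nonneg_left h2 hBc0
  have hbdry : τ * (∑ k ∈ Finset.Icc 1 K, ry k (ey k)) ≤ Ry * Yn := by
    have h1 : ∀ k ∈ Finset.Icc 1 K, (ry k) (ey k) ≤ ‖ry k‖ * ‖ey k‖ := by
      intro k _
      calc (ry k) (ey k) ≤ |(ry k) (ey k)| := le_abs_self _
        _ = ‖(ry k) (ey k)‖ := (Real.norm_eq_abs _).symm
        _ ≤ _ := (ry k).le_opNorm _
    have h2 : τ * (∑ k ∈ Finset.Icc 1 K, ry k (ey k))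
        ≤ τ * ∑ k ∈ Finset.Icc 1 K, ‖ry k‖ * ‖ey k‖ :=
      mul_le_mul_of_nonneg_left (Finset.sum_le_sum h1) hτ.le
    have h3 := ocb_tau_cs hτ.le (Finset.Icc 1 K) (fun k => ‖ry k‖) (fun k => ‖ey k‖)
    rw [← hY2def, ← hYndef, ← hRy] at h3
    linarith only [h2, h3]
  have hYen : α * Y2 ≤ (1/2) * R0 ^ 2 + (Ry + Bc * X) * Yn := by
    have hKnn : 0 ≤ mm (ey K) (ey K) := hmpos _
    linarith only [hco, hsumy, hbdry, hbusum, htely, hmlowy, hKnn, hR0sq]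
  have hYb : Yn ≤ (Ry + Bc * X) / α + R0 / (s2 * sa) := by
    have hq : α * Yn ^ 2 ≤ (Ry + Bc * X) * Yn + (1/2) * R0 ^ 2 := by
      rw [hYnsq]; linarith only [hYen]
    have h := ocb_quad_root_bound hα
      (add_nonneg hRy0 (mul_nonneg hBc0 hX0)) (by positivity) hYn0 hq
    have e : (1/2) * R0 ^ 2 / α = (R0 / (s2 * sa)) ^ 2 := by
      rw [div_pow, mul_pow, hs2sq, hsasq]; ring
    rwa [e, Real.sqrt_sq (by positivity)] at h
  -- ======================= adjoint energy estimate =======================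
  have hidp : ∀ k ∈ Finset.Icc 1 (K - 1),
      τ * a (ep k) (ep k) + τ * σ1 * D (ey k) (ep k)
        = τ * rp k (ep k) - mm (ep k) (ep k - ep (k + 1)) := by
    intro k hk
    have h := hresp k hk (ep k)
    linarith only [h]
  have hsump : τ * (∑ k ∈ Finset.Icc 1 (K - 1), a (ep k) (ep k))
        + τ * σ1 * (∑ k ∈ Finset.Icc 1 (K - 1), D (ey k) (ep k))
      = τ * (∑ k ∈ Finset.Icc 1 (K - 1), rp k (ep k))
        - ∑ k ∈ Finset.Icc 1 (K - 1), mm (ep k) (ep k - ep (k + 1)) := by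
    have h := Finset.sum_congr rfl hidp
    simp only [Finset.sum_add_distrib, Finset.sum_sub_distrib, ← Finset.mul_sum] at h
    exact h
  have htelp : ∑ k ∈ Finset.Icc 1 (K - 1),
        ((1/2) * mm (ep k) (ep k) - (1/2) * mm (ep (k + 1)) (ep (k + 1)))
      = (1/2) * mm (ep 1) (ep 1) - (1/2) * mm (ep K) (ep K) := by
    have h := ocb_telescope_sub' (fun j => (1/2) * mm (ep j) (ep j)) (K - 1)
    rw [hK1] at h
    simpa using h
  have hmlowp : ∑ k ∈ Finset.Icc 1 (K - 1),
        ((1/2) * mm (ep k) (ep k) - (1/2) * mm (ep (k + 1)) (ep (k + 1)))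
      ≤ ∑ k ∈ Finset.Icc 1 (K - 1), mm (ep k) (ep k - ep (k + 1)) :=
    Finset.sum_le_sum fun k _ => ocb_bilin_diff_ge₂ mm hmsymm hmpos _ _
  have hidpK : τ * a (ep K) (ep K) + τ * σ1 * D (ey K) (ep K) + σ2 * D (ey K) (ep K)
      = τ * rp K (ep K) - mm (ep K) (ep K) := by
    have h := hrespK (ep K)
    have e : (τ * σ1 + σ2) * D (ey K) (ep K)
        = τ * σ1 * D (ey K) (ep K) + σ2 * D (ey K) (ep K) := by ring
    linarith only [h, e]
  have hsplitap : τ * (∑ k ∈ Finset.Icc 1 K, a (ep k) (ep k))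
      = τ * (∑ k ∈ Finset.Icc 1 (K - 1), a (ep k) (ep k)) + τ * a (ep K) (ep K) := by
    rw [ocb_sum_split_top hK (f := fun k => a (ep k) (ep k))]; ring
  have hsplitDp : τ * σ1 * (∑ k ∈ Finset.Icc 1 K, D (ey k) (ep k))
      = τ * σ1 * (∑ k ∈ Finset.Icc 1 (K - 1), D (ey k) (ep k))
        + τ * σ1 * D (ey K) (ep K) := by
    rw [ocb_sum_split_top hK (f := fun k => D (ey k) (ep k))]; ring
  have hsplitrpp : τ * (∑ k ∈ Finset.Icc 1 K, rp k (ep k))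
      = τ * (∑ k ∈ Finset.Icc 1 (K - 1), rp k (ep k)) + τ * rp K (ep K) := by
    rw [ocb_sum_split_top hK (f := fun k => (rp k) (ep k))]; ring
  have hcop : α * P2 ≤ τ * (∑ k ∈ Finset.Icc 1 K, a (ep k) (ep k)) := by
    have h1 : ∑ k ∈ Finset.Icc 1 K, α * ‖ep k‖ ^ 2
        ≤ ∑ k ∈ Finset.Icc 1 K, a (ep k) (ep k) :=
      Finset.sum_le_sum fun k _ => ha (ep k)
    have h2 := mul_le_mul_of_nonneg_left h1 hτ.le
    calc α * P2 = τ * ∑ k ∈ Finset.Icc 1 K, α * ‖ep k‖ ^ 2 := by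
          rw [hP2def, ← Finset.mul_sum]; ring
      _ ≤ _ := h2
  have hbdrpp : τ * (∑ k ∈ Finset.Icc 1 K, rp k (ep k)) ≤ Rp * Pn := by
    have h1 : ∀ k ∈ Finset.Icc 1 K, (rp k) (ep k) ≤ ‖rp k‖ * ‖ep k‖ := by
      intro k _
      calc (rp k) (ep k) ≤ |(rp k) (ep k)| := le_abs_self _
        _ = ‖(rp k) (ep k)‖ := (Real.norm_eq_abs _).symm
        _ ≤ _ := (rp k).le_opNorm _
    have h2 : τ * (∑ k ∈ Finset.Icc 1 K, rp k (ep k))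
        ≤ τ * ∑ k ∈ Finset.Icc 1 K, ‖rp k‖ * ‖ep k‖ :=
      mul_le_mul_of_nonneg_left (Finset.sum_le_sum h1) hτ.le
    have h3 := ocb_tau_cs hτ.le (Finset.Icc 1 K) (fun k => ‖rp k‖) (fun k => ‖ep k‖)
    rw [← hP2def, ← hPndef, ← hRp] at h3
    linarith only [h2, h3]
  have hcr1 : - (τ * σ1 * (∑ k ∈ Finset.Icc 1 K, D (ey k) (ep k)))
      ≤ CD * ss1 * Q1 * Pn := by
    have h1 : ∀ k ∈ Finset.Icc 1 K,
        - (D (ey k) (ep k))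
          ≤ Real.sqrt (D (ey k) (ey k)) * Real.sqrt (D (ep k) (ep k)) := fun k _ =>
      (neg_le_abs _).trans (ocb_bilin_abs_le D hDsymm hDpos _ _)
    have h2 : τ * σ1 * (∑ k ∈ Finset.Icc 1 K, - (D (ey k) (ep k)))
        ≤ τ * σ1 * ∑ k ∈ Finset.Icc 1 K,
            Real.sqrt (D (ey k) (ey k)) * Real.sqrt (D (ep k) (ep k)) :=
      mul_le_mul_of_nonneg_left (Finset.sum_le_sum h1) (mul_nonneg hτ.le hσ1)
    have h3 := ocb_tau_cs (t := τ * σ1) (mul_nonneg hτ.le hσ1) (Finset.Icc 1 K)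
      (fun k => Real.sqrt (D (ey k) (ey k))) (fun k => Real.sqrt (D (ep k) (ep k)))
    have h4 : ∑ k ∈ Finset.Icc 1 K, (Real.sqrt (D (ey k) (ey k))) ^ 2
        = ∑ k ∈ Finset.Icc 1 K, D (ey k) (ey k) :=
      Finset.sum_congr rfl fun k _ => Real.sq_sqrt (hDpos _)
    have h5 : ∑ k ∈ Finset.Icc 1 K, (Real.sqrt (D (ep k) (ep k))) ^ 2
        = ∑ k ∈ Finset.Icc 1 K, D (ep k) (ep k) :=
      Finset.sum_congr rfl fun k _ => Real.sq_sqrt (hDpos _)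
    rw [h4, h5, ← hQ1sqdef, ← hQ1def] at h3
    have h6 : τ * σ1 * (∑ k ∈ Finset.Icc 1 K, D (ep k) (ep k)) ≤ σ1 * CD ^ 2 * P2 := by
      have h7 : ∑ k ∈ Finset.Icc 1 K, D (ep k) (ep k)
          ≤ ∑ k ∈ Finset.Icc 1 K, CD ^ 2 * ‖ep k‖ ^ 2 :=
        Finset.sum_le_sum fun k _ => hDC _
      have h8 := mul_le_mul_of_nonneg_left h7 (mul_nonneg hτ.le hσ1)
      have h9 : τ * σ1 * ∑ k ∈ Finset.Icc 1 K, CD ^ 2 * ‖ep k‖ ^ 2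
          = σ1 * CD ^ 2 * P2 := by
        rw [hP2def, ← Finset.mul_sum]; ring
      linarith
    have h10 : Real.sqrt (τ * σ1 * (∑ k ∈ Finset.Icc 1 K, D (ep k) (ep k)))
        ≤ CD * ss1 * Pn := by
      have e : σ1 * CD ^ 2 * P2 = (CD * ss1 * Pn) ^ 2 := by
        rw [mul_pow, mul_pow, hss1sq, hPnsq]; ring
      calc Real.sqrt (τ * σ1 * (∑ k ∈ Finset.Icc 1 K, D (ep k) (ep k)))
          ≤ Real.sqrt (σ1 * CD ^ 2 * P2) := Real.sqrt_le_sqrt h6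
        _ = _ := by rw [e, Real.sqrt_sq (mul_nonneg (mul_nonneg hCD hss1_0) hPn0)]
    have h11 : Q1 * Real.sqrt (τ * σ1 * (∑ k ∈ Finset.Icc 1 K, D (ep k) (ep k)))
        ≤ Q1 * (CD * ss1 * Pn) := mul_le_mul_of_nonneg_left h10 hQ10
    have h12 : ∑ k ∈ Finset.Icc 1 K, - (D (ey k) (ep k))
        = - ∑ k ∈ Finset.Icc 1 K, D (ey k) (ep k) := Finset.sum_neg_distrib _
    rw [h12] at h2
    linarith only [h2, h3, h11]
  have hcr2 : - (σ2 * D (ey K) (ep K)) ≤ ss2 * Q2 * MpK := by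
    have h1 : - (D (ey K) (ep K))
        ≤ Real.sqrt (D (ey K) (ey K)) * Real.sqrt (D (ep K) (ep K)) :=
      (neg_le_abs _).trans (ocb_bilin_abs_le D hDsymm hDpos _ _)
    have h2 : Real.sqrt (D (ep K) (ep K)) ≤ MpK := by
      rw [hMpKdef]; exact Real.sqrt_le_sqrt (hDm _)
    have hQ2e : Q2 = ss2 * Real.sqrt (D (ey K) (ey K)) := by
      rw [hQ2def, hQ2sqdef, Real.sqrt_mul hσ2, hss2def]
    have h3 : σ2 * (- (D (ey K) (ep K)))
        ≤ σ2 * (Real.sqrt (D (ey K) (ey K)) * Real.sqrt (D (ep K) (ep K))) :=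
      mul_le_mul_of_nonneg_left h1 hσ2
    have h4 : σ2 * (Real.sqrt (D (ey K) (ey K)) * Real.sqrt (D (ep K) (ep K)))
        ≤ σ2 * (Real.sqrt (D (ey K) (ey K)) * MpK) := by
      apply mul_le_mul_of_nonneg_left _ hσ2
      exact mul_le_mul_of_nonneg_left h2 (Real.sqrt_nonneg _)
    have h5 : σ2 * (Real.sqrt (D (ey K) (ey K)) * MpK) = ss2 * Q2 * MpK := by
      rw [hQ2e, ← hss2sq]; ring
    linarith only [h3, h4, h5]
  have hYoung : ss2 * Q2 * MpK ≤ (1/2) * (ss2 * Q2) ^ 2 + (1/2) * MpK ^ 2 := by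
    nlinarith only [sq_nonneg (ss2 * Q2 - MpK)]
  have hsq2y : (ss2 * Q2) ^ 2 = σ2 * Q2 ^ 2 := by rw [mul_pow, hss2sq]
  have hPen : (1/2) * Mp1 ^ 2 + α * P2
      ≤ (Rp + CD * ss1 * Q1) * Pn + σ2 * Q2 ^ 2 / 2 := by
    linarith only [hsump, htelp, hmlowp, hidpK, hsplitap, hsplitDp, hsplitrpp, hcop,
      hbdrpp, hcr1, hcr2, hYoung, hsq2y, hMp1sq, hMpKsq]
  have hbP0 : 0 ≤ Rp + CD * ss1 * Q1 :=
    add_nonneg hRp0 (mul_nonneg (mul_nonneg hCD hss1_0) hQ10)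
  have hdP0 : (0:ℝ) ≤ σ2 * Q2 ^ 2 / 2 :=
    div_nonneg (mul_nonneg hσ2 (sq_nonneg _)) (by norm_num)
  have hPb : Pn ≤ (Rp + CD * ss1 * Q1) / α + ss2 * Q2 / (s2 * sa) := by
    have hq : α * Pn ^ 2 ≤ (Rp + CD * ss1 * Q1) * Pn + σ2 * Q2 ^ 2 / 2 := by
      rw [hPnsq]; linarith only [hPen, sq_nonneg Mp1]
    have h := ocb_quad_root_bound hα hbP0 hdP0 hPn0 hq
    have e : σ2 * Q2 ^ 2 / 2 / α = (ss2 * Q2 / (s2 * sa)) ^ 2 := by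
      rw [div_pow, mul_pow, mul_pow, hss2sq, hs2sq, hsasq]; ring
    rwa [e, Real.sqrt_sq (div_nonneg (mul_nonneg hss2_0 hQ20)
      (mul_nonneg hs2pos.le hsapos.le))] at h
  have hMb : Mp1 ≤ (Rp + CD * ss1 * Q1) / (s2 * sa) + ss2 * Q2 := by
    have hq : (1/2) * Mp1 ^ 2 + α * Pn ^ 2
        ≤ (Rp + CD * ss1 * Q1) * Pn + σ2 * Q2 ^ 2 / 2 := by
      rw [hPnsq]; exact hPen
    have h := ocb_half_sq_bound hα hbP0 hdP0 hMp10 hq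
    have e1 : Real.sqrt (2 * α) = s2 * sa := by
      rw [Real.sqrt_mul (by norm_num : (0:ℝ) ≤ 2), hs2def, hsadef]
    have e2 : 2 * (σ2 * Q2 ^ 2 / 2) = (ss2 * Q2) ^ 2 := by
      rw [mul_pow, hss2sq]; ring
    rwa [e1, e2, Real.sqrt_sq (mul_nonneg hss2_0 hQ20)] at h
  -- ======================= final assembly =======================
  rw [← hsasq] at hYb hPb
  set v1 := 1 / (s2 * sa) with hv1def
  set v2 := 1 / sa ^ 2 with hv2def
  set v3 := 1 / sa with hv3def
  have hv10 : 0 < v1 := by rw [hv1def]; exact one_div_pos.mpr (mul_pos hs2pos hsapos)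
  have hv20 : 0 < v2 := by rw [hv2def]; exact one_div_pos.mpr (pow_pos hsapos 2)
  have hv30 : 0 < v3 := by rw [hv3def]; exact one_div_pos.mpr hsapos
  have hv1sq : v1 ^ 2 = v2 / 2 := by
    rw [hv1def, hv2def]
    rw [div_pow, one_pow, mul_pow, hs2sq]
    rw [div_div]
    ring
  have hv13 : 2 * v1 = s2 * v3 := by
    rw [hv1def, hv3def]
    field_simp
    linear_combination (-1) * hs2sq
  have hYb' : Yn ≤ (Ry + Bc * X) * v2 + R0 * v1 :=
    hYb.trans (le_of_eq (by rw [hv1def, hv2def]; ring))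
  have hPb' : Pn ≤ (Rp + CD * ss1 * Q1) * v2 + ss2 * Q2 * v1 :=
    hPb.trans (le_of_eq (by rw [hv1def, hv2def]; ring))
  have hMb' : Mp1 ≤ (Rp + CD * ss1 * Q1) * v1 + ss2 * Q2 :=
    hMb.trans (le_of_eq (by rw [hv1def]; ring))
  have e1 : R0 * Mp1 ≤ R0 * ((Rp + CD * ss1 * Q1) * v1 + ss2 * Q2) :=
    mul_le_mul_of_nonneg_left hMb' hR00
  have e2 : Rp * Yn ≤ Rp * ((Ry + Bc * X) * v2 + R0 * v1) :=
    mul_le_mul_of_nonneg_left hYb' hRp0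
  have e3 : Ry * Pn ≤ Ry * ((Rp + CD * ss1 * Q1) * v2 + ss2 * Q2 * v1) :=
    mul_le_mul_of_nonneg_left hPb' hRy0
  have g4 := ocb_young4 Q1 (CD * ss1 * R0 * v1) (CD * ss1 * Ry * v2)
  have g5 := ocb_young5 Q2 (ss2 * R0) (ss2 * Ry * v1)
  have hu1 : 2 * (CD * ss1 * R0 * v1) ^ 2 = CD ^ 2 * ss1 ^ 2 * v2 * R0 ^ 2 := by
    linear_combination (2 * CD ^ 2 * ss1 ^ 2 * R0 ^ 2) * hv1sq
  have hu4 : (ss2 * Ry * v1) ^ 2 = ss2 ^ 2 * (v2 / 2) * Ry ^ 2 := by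
    linear_combination (ss2 ^ 2 * Ry ^ 2) * hv1sq
  have hng1 : 0 ≤ (s2 - 1) * (Bc * (Rp * (X * v2))) :=
    mul_nonneg (by linarith) (mul_nonneg hBc0 (mul_nonneg hRp0 (mul_nonneg hX0 hv20.le)))
  have hng2 : 0 ≤ (s2 - 1) * (Ry * (Rp * v2)) :=
    mul_nonneg (by linarith) (mul_nonneg hRy0 (mul_nonneg hRp0 hv20.le))
  have hng3 : R0 * (Rp * v1) + Rp * (R0 * v1) ≤ (1 + s2) * v3 * (R0 * Rp) := by
    have hv13R : 2 * v1 * (R0 * Rp) = s2 * v3 * (R0 * Rp) := by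
      linear_combination (R0 * Rp) * hv13
    have h0 : 0 ≤ v3 * (R0 * Rp) := mul_nonneg hv30.le (mul_nonneg hR00 hRp0)
    linarith only [hv13R, h0]
  have key : lam * X ^ 2
      ≤ s2 * Bc * Rp * v2 * X
        + ((2 * s2 * v2 * Ry + (1 + s2) * v3 * R0) * Rp
          + (CD ^ 2 * ss1 ^ 2 * v2 + ss2 ^ 2 / 2) * R0 ^ 2
          + (CD ^ 2 * ss1 ^ 2 * v2 ^ 2 + ss2 ^ 2 * (v2 / 2)) * Ry ^ 2) := by
    rw [hXsq]
    linarith only [hA, e1, e2, e3, g4, g5, hu1, hu4, hng1, hng2, hng3, hQ1sqe, hQ2sqe]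
  -- convert to c1, c2
  rw [← hsasq] at hc1 hc2
  rw [← hss1sq, ← hss2sq] at hc2
  have hEc1 : lam * (2 * c1) = s2 * Bc * Rp * v2 := by
    rw [hc1, hv2def]
    field_simp
    linear_combination (-(Bc * Rp)) * hs2sq
  have hEc2 : lam * c2
      = (2 * s2 * v2 * Ry + (1 + s2) * v3 * R0) * Rp
        + (CD ^ 2 * ss1 ^ 2 * v2 + ss2 ^ 2 / 2) * R0 ^ 2
        + (CD ^ 2 * ss1 ^ 2 * v2 ^ 2 + ss2 ^ 2 * (v2 / 2)) * Ry ^ 2 := by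
    rw [hc2, hv2def, hv3def]
    field_simp
  have hquad : lam * X ^ 2 ≤ lam * (2 * c1 * X + c2) := by
    have hEc1X : lam * (2 * c1) * X = s2 * Bc * Rp * v2 * X := by rw [hEc1]
    have e : lam * (2 * c1 * X + c2) = lam * (2 * c1) * X + lam * c2 := by ring
    rw [e, hEc1X, hEc2]
    linarith only [key]
  have hquad2 : X ^ 2 ≤ 2 * c1 * X + c2 := le_of_mul_le_mul_left hquad hlam
  have h1 : (X - c1) ^ 2 ≤ c1 ^ 2 + c2 := by linarith only [hquad2]
  have h2 : X - c1 ≤ Real.sqrt (c1 ^ 2 + c2) := by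
    calc X - c1 ≤ |X - c1| := le_abs_self _
      _ = Real.sqrt ((X - c1) ^ 2) := (Real.sqrt_sq_eq_abs _).symm
      _ ≤ _ := Real.sqrt_le_sqrt h1
  linarith only [h2]
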